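/- Let X be a Gromov δ-hyperbolic metric space with basepoint x₀ and let h ∈ X^h_∞ be a horofunction with inf h = −∞. If (xₙ) is a sequence in X with h_{xₙ} → h pointwise, and (yₙ) is a sequence in X with h(yₙ) → −∞, then both (xₙ) and (yₙ) are Gromov sequences. -/

import Mathlib

open Filter Topology MeasureTheory TopologicalSpace ENNReal

noncomputable section

namespace Paper

variable {X : Type*} [MetricSpace X]


/-- The Gromov product `⟨x,z⟩_y`. -/
def gp (x z y : X) : ℝ := (dist x y + dist z y - dist x z) / 2

/-- `X` is Gromov `δ`-hyperbolic: the 4-point condition. -/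
def IsHyperbolic (X : Type*) [MetricSpace X] (δ : ℝ) : Prop :=
  ∀ x y z w : X, gp x z w ≥ min (gp x y w) (gp y z w) - δ

/-- `X` is a geodesic metric space. -/
def IsGeodesic (X : Type*) [MetricSpace X] : Prop :=
  ∀ x y : X, ∃ γ : ℝ → X, γ 0 = x ∧ γ (dist x y) = y ∧
    ∀ s ∈ Set.Icc (0:ℝ) (dist x y), ∀ t ∈ Set.Icc (0:ℝ) (dist x y),
      dist (γ s) (γ t) = |s - t|

/-- A Gromov sequence (a sequence converging to infinity). -/
def IsGromovSeq (x₀ : X) (u : ℕ → X) : Prop :=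
  Tendsto (fun p : ℕ × ℕ => gp (u p.1) (u p.2) x₀) atTop atTop

/-- Equivalence of Gromov sequences. -/
def GromovEquiv (x₀ : X) (u v : ℕ → X) : Prop :=
  Tendsto (fun n => gp (u n) (v n) x₀) atTop atTop

/-- The type of Gromov sequences based at `x₀`. -/
def GromovSeq (x₀ : X) := {u : ℕ → X // IsGromovSeq x₀ u}

/-- The relation defining the Gromov boundary. -/
def bRel (x₀ : X) (u v : GromovSeq x₀) : Prop := GromovEquiv x₀ u.1 v.1

/-- The Gromov boundary `∂X`: equivalence classes of Gromov sequences. -/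
def GromovBoundary (x₀ : X) := Quot (bRel x₀)

/-- `Bord X = X ∪ ∂X`. -/
def Bord (x₀ : X) := X ⊕ GromovBoundary x₀

/-- The extension of the Gromov product to `Bord X`, with values in `EReal`. -/
def egp (x₀ : X) : Bord x₀ → Bord x₀ → X → EReal
  | .inl x, .inl y, z => ((gp x y z : ℝ) : EReal)
  | .inl x, .inr η, z => sInf {t : EReal | ∃ v : GromovSeq x₀, Quot.mk (bRel x₀) v = η ∧
      t = liminf (fun n => ((gp x (v.1 n) z : ℝ) : EReal)) atTop}
  | .inr ξ, .inl y, z => sInf {t : EReal | ∃ u : GromovSeq x₀, Quot.mk (bRel x₀) u = ξ ∧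
      t = liminf (fun n => ((gp (u.1 n) y z : ℝ) : EReal)) atTop}
  | .inr ξ, .inr η, z => sInf {t : EReal | ∃ u v : GromovSeq x₀,
      Quot.mk (bRel x₀) u = ξ ∧ Quot.mk (bRel x₀) v = η ∧
      t = liminf (fun p : ℕ × ℕ => ((gp (u.1 p.1) (v.1 p.2) z : ℝ) : EReal)) atTop}

/-- The visual quasi-metric `ρ_b(ξ,η) = b^{-⟨ξ,η⟩_{x₀}}`. -/
def rho (x₀ : X) (b : ℝ) (ξ η : Bord x₀) : ℝ :=
  if egp x₀ ξ η x₀ = ⊤ then 0 else b ^ (-(egp x₀ ξ η x₀).toReal)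

/-- The `ρ_b`-length of a chain. -/
def chainSum (x₀ : X) (b : ℝ) (l : List (Bord x₀)) : ℝ :=
  ((l.zip l.tail).map fun p => rho x₀ b p.1 p.2).sum

/-- `D̄_b`: the infimum of `ρ_b`-lengths of chains joining two points of `Bord X`. -/
def Dbar (x₀ : X) (b : ℝ) (ξ η : Bord x₀) : ℝ :=
  sInf {s : ℝ | ∃ l : List (Bord x₀), l.head? = some ξ ∧ l.getLast? = some η ∧
    s = chainSum x₀ b l}

/-- The metric `D_b` on `Bord X`. -/
def Db (x₀ : X) (b : ℝ) : Bord x₀ → Bord x₀ → ℝ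
  | .inl x, .inl y => min (Real.log b * dist x y) (Dbar x₀ b (.inl x) (.inl y))
  | ξ, η => Dbar x₀ b ξ η


lemma gp_isom (g : X ≃ᵢ X) (x y z : X) : gp (g x) (g y) z = gp x y (g.symm z) := by
  have h1 : dist x (g.symm z) = dist (g x) z := by
    rw [← g.symm.dist_eq (g x) z, g.symm_apply_apply]
  have h2 : dist y (g.symm z) = dist (g y) z := by
    rw [← g.symm.dist_eq (g y) z, g.symm_apply_apply]
  have h3 : dist (g x) (g y) = dist x y := g.dist_eq x y
  simp only [gp, h1, h2, h3]

lemma gp_base (x y z w : X) : gp x y z - dist w z ≤ gp x y w := by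
  have h1 := dist_triangle x w z
  have h2 := dist_triangle y w z
  have h3 := dist_comm w z
  simp only [gp]
  nlinarith [dist_nonneg (x := x) (y := w)]

lemma isGromovSeq_isom (x₀ : X) (g : X ≃ᵢ X) {u : ℕ → X} (hu : IsGromovSeq x₀ u) :
    IsGromovSeq x₀ fun n => g (u n) := by
  have key : ∀ p : ℕ × ℕ,
      gp (u p.1) (u p.2) x₀ + -(dist (g.symm x₀) x₀) ≤ gp (g (u p.1)) (g (u p.2)) x₀ := by
    intro p
    rw [gp_isom]
    have := gp_base (u p.1) (u p.2) x₀ (g.symm x₀)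
    have hd : dist x₀ (g.symm x₀) = dist (g.symm x₀) x₀ := dist_comm _ _
    linarith [gp_base (u p.1) (u p.2) x₀ (g.symm x₀)]
  exact tendsto_atTop_mono key (tendsto_atTop_add_const_right atTop _ hu)

lemma gromovEquiv_isom (x₀ : X) (g : X ≃ᵢ X) {u v : ℕ → X} (huv : GromovEquiv x₀ u v) :
    GromovEquiv x₀ (fun n => g (u n)) fun n => g (v n) := by
  have key : ∀ n : ℕ,
      gp (u n) (v n) x₀ + -(dist (g.symm x₀) x₀) ≤ gp (g (u n)) (g (v n)) x₀ := by
    intro n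
    rw [gp_isom]
    linarith [gp_base (u n) (v n) x₀ (g.symm x₀)]
  exact tendsto_atTop_mono key (tendsto_atTop_add_const_right atTop _ huv)

/-- The action of an isometry on the Gromov boundary. -/
def bMap (x₀ : X) (g : X ≃ᵢ X) : GromovBoundary x₀ → GromovBoundary x₀ :=
  Quot.map (fun u : GromovSeq x₀ => (⟨fun n => g (u.1 n), isGromovSeq_isom x₀ g u.2⟩ : GromovSeq x₀))
    (fun _ _ h => gromovEquiv_isom x₀ g h)

/-- The action of an isometry on `Bord X`. -/
def bordMap (x₀ : X) (g : X ≃ᵢ X) : Bord x₀ → Bord x₀ :=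
  Sum.map (fun x => g x) (bMap x₀ g)


/-- The metric `d_G` on the isometry group. -/
def dG (x₀ : X) (b : ℝ) (g₁ g₂ : X ≃ᵢ X) : ℝ :=
  max (⨆ ξ : Bord x₀, Db x₀ b (bordMap x₀ g₁ ξ) (bordMap x₀ g₂ ξ))
      (⨆ ξ : Bord x₀, Db x₀ b (bordMap x₀ g₁.symm ξ) (bordMap x₀ g₂.symm ξ))

/-- The isometry group of `X`, as a type tagged by the basepoint `x₀` and the
parameter `b`, carrying the topology induced by the metric `d_G` and its Borel
σ-algebra. -/
def IsomG (X : Type*) [MetricSpace X] (x₀ : X) (b : ℝ) : Type _ := X ≃ᵢ X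

variable {x₀ : X} {b : ℝ}

/-- The underlying isometry. -/
def IsomG.toE (g : IsomG X x₀ b) : X ≃ᵢ X := g

instance : Group (IsomG X x₀ b) := inferInstanceAs (Group (X ≃ᵢ X))

/-- The topology on the isometry group generated by the `d_G`-balls (for a genuine
metric this is the metric topology). -/
instance : TopologicalSpace (IsomG X x₀ b) :=
  TopologicalSpace.generateFrom
    {U | ∃ (g : IsomG X x₀ b) (r : ℝ), U = {g' : IsomG X x₀ b | dG x₀ b g.toE g'.toE < r}}

instance : MeasurableSpace (IsomG X x₀ b) := borel (IsomG X x₀ b)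

/-- `μ` is a compactly supported Borel probability measure with support inside the
set `S`. -/
def ProbOn (S : Set (IsomG X x₀ b)) (μ : Measure (IsomG X x₀ b)) : Prop :=
  IsProbabilityMeasure μ ∧
    ∃ K : Set (IsomG X x₀ b), IsCompact K ∧ K ⊆ S ∧ μ Kᶜ = 0

/-- The set `G_λ = {g ∈ G : b^{d(gx₀,x₀)} < λ}`. -/
def Glam (G : Subgroup (IsomG X x₀ b)) (lam : ℝ) : Set (IsomG X x₀ b) :=
  {g : IsomG X x₀ b | g ∈ G ∧ b ^ dist (g.toE x₀) x₀ < lam}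

/-- Convolution of measures on the isometry group. -/
def conv (μ ν : Measure (IsomG X x₀ b)) : Measure (IsomG X x₀ b) :=
  Measure.map (fun p : IsomG X x₀ b × IsomG X x₀ b => p.1 * p.2) (μ.prod ν)

/-- Convolution powers `μⁿ` (with `μ⁰ = δ_id`). -/
def convPow (μ : Measure (IsomG X x₀ b)) : ℕ → Measure (IsomG X x₀ b)
  | 0 => Measure.dirac 1
  | n + 1 => conv μ (convPow μ n)

/-- `HasDrift μ ℓ`: the drift `ℓ(μ) = lim (1/n) ∫ d(gx₀, x₀) dμⁿ(g)` exists and equals `ℓ`. -/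
def HasDrift (μ : Measure (IsomG X x₀ b)) (ℓ : ℝ) : Prop :=
  Tendsto (fun n : ℕ => (∫ g : IsomG X x₀ b, dist (g.toE x₀) x₀ ∂(convPow μ n)) / n)
    atTop (𝓝 ℓ)

/-- A bounded Borel function with `α`-Hölder constant (w.r.t. `d_G`) at most 1. -/
def Holder1 (α : ℝ) (φ : IsomG X x₀ b → ℝ) : Prop :=
  Measurable φ ∧ (∃ C : ℝ, ∀ g, |φ g| ≤ C) ∧
    ∀ g g' : IsomG X x₀ b, |φ g - φ g'| ≤ dG x₀ b g.toE g'.toE ^ α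

/-- The `α`-Hölder Wasserstein distance `W_α`. -/
def Wass (α : ℝ) (μ ν : Measure (IsomG X x₀ b)) : ℝ :=
  sSup {t : ℝ | ∃ φ : IsomG X x₀ b → ℝ, Holder1 α φ ∧
    t = |(∫ g, φ g ∂μ) - ∫ g, φ g ∂ν|}

/-- The function `h_x = d(·,x) - d(x,x₀)`. -/
def hfun (x₀ x : X) : X → ℝ := fun z => dist z x - dist x x₀

/-- The horofunction compactification: the closure of `{h_x : x ∈ X}` in the topology of
pointwise convergence. -/
def Xh (x₀ : X) : Set (X → ℝ) := closure (Set.range (hfun x₀))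

/-- The infinite part `X^h_∞` of the horofunction compactification. -/
def XhInf (x₀ : X) : Set (X → ℝ) := {h ∈ Xh x₀ | ¬ BddBelow (Set.range h)}

/-- The action of isometries on horofunctions: `(g·h)(z) = h(g⁻¹z) - h(g⁻¹x₀)`. -/
def horoAct (x₀ : X) (g : X ≃ᵢ X) (h : X → ℝ) : X → ℝ :=
  fun z => h (g.symm z) - h (g.symm x₀)

/-- `μ` is irreducible: no horofunction is fixed by `μ`-almost every `g`. -/
def IrredMeasure (μ : Measure (IsomG X x₀ b)) : Prop :=
  ¬ ∃ h ∈ Xh x₀, ∀ᵐ g ∂μ, horoAct x₀ (IsomG.toE g) h = h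

/-- The Gromov boundary, tagged by `b`, carrying the visual topology generated by the
`D̄_b`-balls and its Borel σ-algebra. -/
def Bdry (x₀ : X) (b : ℝ) := GromovBoundary x₀

def Bdry.toB (ξ : Bdry x₀ b) : GromovBoundary x₀ := ξ

def Bdry.ofB (x₀ : X) (b : ℝ) (ξ : GromovBoundary x₀) : Bdry x₀ b := ξ

instance : TopologicalSpace (Bdry x₀ b) :=
  TopologicalSpace.generateFrom
    {U | ∃ (ξ : Bdry x₀ b) (r : ℝ),
      U = {η : Bdry x₀ b | Dbar x₀ b (Sum.inr ξ.toB) (Sum.inr η.toB) < r}}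

instance : MeasurableSpace (Bdry x₀ b) := borel (Bdry x₀ b)

/-- The action of `g⁻¹` on the boundary (the convention used for stationary measures). -/
def bdryAct (g : IsomG X x₀ b) (ξ : Bdry x₀ b) : Bdry x₀ b :=
  Bdry.ofB x₀ b (bMap x₀ (IsomG.toE g).symm ξ.toB)

/-- `ν` is `μ`-stationary for the action `(g,ξ) ↦ g⁻¹ξ` of `G` on `∂X`. -/
def Stationary (μ : Measure (IsomG X x₀ b)) (ν : Measure (Bdry x₀ b)) : Prop :=
  μ.bind (fun g => Measure.map (bdryAct g) ν) = ν

/-- The Markov operator `(Q_μ f)(ξ) = ∫ f(g⁻¹ξ) dμ(g)`. -/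
def Qop (μ : Measure (IsomG X x₀ b)) (f : Bdry x₀ b → ℝ) : Bdry x₀ b → ℝ :=
  fun ξ => ∫ g : IsomG X x₀ b, f (bdryAct g ξ) ∂μ

/-- Iterates of the Markov operator. -/
def QopIter (μ : Measure (IsomG X x₀ b)) (f : Bdry x₀ b → ℝ) : ℕ → (Bdry x₀ b → ℝ)
  | 0 => f
  | n + 1 => Qop μ (QopIter μ f n)

/-- The `α`-Hölder constant `υ_α(f)` of a function on the boundary (valued in `ℝ≥0∞`),
w.r.t. the visual metric `D_b = D̄_b` on `∂X`. -/
def holdC (α : ℝ) (f : Bdry x₀ b → ℝ) : ℝ≥0∞ :=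
  ⨆ (p : Bdry x₀ b × Bdry x₀ b) (_ : p.1 ≠ p.2),
    ENNReal.ofReal (|f p.1 - f p.2| / Dbar x₀ b (Sum.inr p.1.toB) (Sum.inr p.2.toB) ^ α)

/-- `f` belongs to the Banach algebra `H_α(∂X)` of bounded Borel boundary Hölder
continuous functions. -/
def MemHolder (α : ℝ) (f : Bdry x₀ b → ℝ) : Prop :=
  Measurable f ∧ (∃ C : ℝ, ∀ ξ, |f ξ| ≤ C) ∧ holdC α f ≠ ⊤

/-- The average Hölder constant `k_α^n(μ)` (valued in `ℝ≥0∞`). -/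
def kcoef (α : ℝ) (μ : Measure (IsomG X x₀ b)) (n : ℕ) : ℝ≥0∞ :=
  ⨆ (p : Bdry x₀ b × Bdry x₀ b) (_ : p.1 ≠ p.2),
    ENNReal.ofReal (∫ g : IsomG X x₀ b,
      (Dbar x₀ b (Sum.inr (bdryAct g p.1).toB) (Sum.inr (bdryAct g p.2).toB) /
        Dbar x₀ b (Sum.inr p.1.toB) (Sum.inr p.2.toB)) ^ α ∂(convPow μ n))

/-- The local-minimum map and its inverse witness the basic assumption (BA): `φ` is a
`G`-equivariant homeomorphism from `X^h_∞` onto `∂X` sending a horofunction to the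
equivalence class of any sequence along which it tends to `-∞`. -/
structure BasicAssumption (x₀ : X) (b : ℝ) (lm : (X → ℝ) → Bdry x₀ b)
    (hinv : Bdry x₀ b → (X → ℝ)) : Prop where
  localMin : ∀ h ∈ XhInf x₀, ∀ y : ℕ → X,
    Tendsto (fun n => h (y n)) atTop atBot →
      ∃ hy : IsGromovSeq x₀ y, (lm h).toB = Quot.mk (bRel x₀) (⟨y, hy⟩ : GromovSeq x₀)
  contOn : ContinuousOn lm (XhInf x₀)
  inv_mem : ∀ ξ : Bdry x₀ b, hinv ξ ∈ XhInf x₀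
  left_inv : ∀ h ∈ XhInf x₀, hinv (lm h) = h
  right_inv : ∀ ξ : Bdry x₀ b, lm (hinv ξ) = ξ
  cont_inv : Continuous hinv

/-- The horofunction `h_ξ` associated to a point of `Bord X` (for `ξ ∈ X` this is `h_x`,
for `ξ ∈ ∂X` it is the horofunction corresponding to `ξ` under (BA)). -/
def hB (x₀ : X) (b : ℝ) (hinv : Bdry x₀ b → (X → ℝ)) : Bord x₀ → (X → ℝ)
  | .inl x => hfun x₀ x
  | .inr ξ => hinv (Bdry.ofB x₀ b ξ)

/-- `P` is the product measure `μ^ℕ` on `Ω = G^ℕ`. -/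
def IsProductMeasure (μ : Measure (IsomG X x₀ b)) (P : Measure (ℕ → IsomG X x₀ b)) : Prop :=
  IsProbabilityMeasure P ∧
    ∀ (n : ℕ) (E : Fin n → Set (IsomG X x₀ b)), (∀ i, MeasurableSet (E i)) →
      P {ω | ∀ i : Fin n, ω i ∈ E i} = ∏ i : Fin n, μ (E i)

/-- `ωⁿ = g₀g₁⋯g_{n-1}`. -/
def prodN (ω : ℕ → IsomG X x₀ b) (n : ℕ) : IsomG X x₀ b :=
  ((List.range n).map ω).prod



lemma gp_comm' (a c w : X) : gp a c w = gp c a w := by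
  unfold gp; rw [dist_comm a c]; ring

lemma gp_hfun (a c w : X) : gp a c w = (dist c w - hfun w a c) / 2 := by
  simp only [gp, hfun, dist_comm c a]; ring

set_option maxHeartbeats 1000000 in
/-- **Sequences attached to an infinite horofunction are Gromov.** -/
theorem horofunction_sequences_are_gromov
    {X : Type*} [MetricSpace X] (x₀ : X) (δ : ℝ)
    (hhyp : IsHyperbolic X δ)
    (h : X → ℝ) (hh : h ∈ Xh x₀) (hinf : ¬ BddBelow (Set.range h))
    (x y : ℕ → X)
    (hx : ∀ z : X, Tendsto (fun n => hfun x₀ (x n) z) atTop (𝓝 (h z)))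
    (hy : Tendsto (fun n => h (y n)) atTop atBot) :
    IsGromovSeq x₀ x ∧ IsGromovSeq x₀ y := by
  -- lower bound on `h`
  have hlb : ∀ z : X, -dist z x₀ ≤ h z := by
    intro z
    refine ge_of_tendsto (hx z) (Eventually.of_forall fun n => ?_)
    have ht := dist_triangle (x n) z x₀
    have hc : dist z (x n) = dist (x n) z := dist_comm _ _
    simp only [hfun]
    linarith
  -- Step 1: `x` is a Gromov sequence
  have hxG : IsGromovSeq x₀ x := by
    rw [IsGromovSeq, tendsto_atTop]
    intro M
    obtain ⟨w, ⟨z, rfl⟩, hz⟩ := not_bddBelow_iff.mp hinf (-(2 * |M| + 2 * |δ| + 1))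
    have hev : ∀ᶠ n in atTop, M + δ ≤ gp (x n) z x₀ := by
      filter_upwards [(hx z).eventually (eventually_le_nhds
        (show h z < h z + 1 by linarith))] with n hn
      have h1 := hlb z
      rw [gp_hfun]
      have := le_abs_self M
      have := le_abs_self δ
      have := abs_nonneg M
      have := abs_nonneg δ
      linarith
    have : ∀ᶠ p : ℕ × ℕ in atTop ×ˢ atTop, M ≤ gp (x p.1) (x p.2) x₀ := by
      filter_upwards [hev.prod_mk hev] with p hp
      have e1 := hhyp (x p.1) z (x p.2) x₀
      have hcm : gp z (x p.2) x₀ = gp (x p.2) z x₀ := gp_comm' _ _ _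
      have hmin : M + δ ≤ min (gp (x p.1) z x₀) (gp z (x p.2) x₀) := by
        rw [hcm]; exact le_min hp.1 hp.2
      linarith
    rwa [prod_atTop_atTop_eq] at this
  refine ⟨hxG, ?_⟩
  -- choose times along `x` approximating `h` at `y n`
  have hkex : ∀ n : ℕ, ∃ m, n ≤ m ∧ hfun x₀ (x m) (y n) ≤ h (y n) + 1 := by
    intro n
    have hev := (hx (y n)).eventually (eventually_le_nhds
      (show h (y n) < h (y n) + 1 by linarith))
    obtain ⟨m, hm⟩ := ((eventually_ge_atTop n).and hev).exists
    exact ⟨m, hm.1, hm.2⟩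
  choose k hk1 hk2 using hkex
  have hkT : Tendsto k atTop atTop := tendsto_atTop_mono hk1 tendsto_id
  have hD : Tendsto (fun p : ℕ × ℕ => gp (x (k p.1)) (x (k p.2)) x₀) atTop atTop := by
    have h2 : Tendsto (fun p : ℕ × ℕ => (k p.1, k p.2)) atTop atTop := by
      rw [← prod_atTop_atTop_eq]
      exact (hkT.comp tendsto_fst).prodMk (hkT.comp tendsto_snd)
    exact hxG.comp h2
  -- Step 2: `y` is a Gromov sequence
  rw [IsGromovSeq, tendsto_atTop]
  intro M
  have hC : ∀ᶠ n in atTop, M + 2 * |δ| ≤ gp (x (k n)) (y n) x₀ := by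
    filter_upwards [hy.eventually (eventually_le_atBot (-(2 * (|M| + 2 * |δ|) + 1)))] with n hn
    have h1 := hlb (y n)
    have h2 := hk2 n
    have := le_abs_self M
    have := le_abs_self δ
    have := abs_nonneg M
    have := abs_nonneg δ
    rw [gp_hfun]
    linarith
  have hDe := (tendsto_atTop.mp hD) (M + 2 * |δ|)
  rw [← prod_atTop_atTop_eq] at hDe ⊢
  filter_upwards [(hC.prod_mk hC).and hDe] with p hp
  obtain ⟨⟨c1, c2⟩, d⟩ := hp
  have e1 := hhyp (y p.1) (x (k p.1)) (y p.2) x₀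
  have e2 := hhyp (x (k p.1)) (x (k p.2)) (y p.2) x₀
  have comm1 : gp (y p.1) (x (k p.1)) x₀ = gp (x (k p.1)) (y p.1) x₀ := gp_comm' _ _ _
  have ha1 := le_abs_self δ
  have ha2 := neg_abs_le δ
  have ha3 := abs_nonneg δ
  have m2 : M + 2 * |δ| ≤ min (gp (x (k p.1)) (x (k p.2)) x₀) (gp (x (k p.2)) (y p.2) x₀) :=
    le_min d c2
  have m1 : M + |δ| ≤ min (gp (y p.1) (x (k p.1)) x₀) (gp (x (k p.1)) (y p.2) x₀) := by
    rw [comm1]; exact le_min (by linarith) (by linarith)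
  linarith

end Paper
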